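/- arXiv:1704.06297 — 2 statements merged into one kernel-verified Lean document; each statement's English description precedes it below -/
import Mathlib

section
/- Let T be a finite tree with vertex sets W_1 (degree 1), W_2 (degree 2), W_3 (degree ≥ 3). The number of connected components of the subgraph induced by W_2 is at most |W_1| + |W_3| − 1. -/
open SimpleGraph Finset

/-- In a finite tree, the number of connected components of the subgraph induced
by the degree-2 vertices is at most `|W₁| + |W₃| − 1`, where `W₁` and `W₃` are the
sets of vertices of degree 1 and of degree at least 3, respectively. -/
theorem stmt6 {V : Type*} [Fintype V] (G : SimpleGraph V) [DecidableRel G.Adj]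
    (hT : G.IsTree) :
    Nat.card ((G.induce {v : V | G.degree v = 2}).ConnectedComponent) ≤
      (Finset.univ.filter fun v => G.degree v = 1).card +
        (Finset.univ.filter fun v => 3 ≤ G.degree v).card - 1 := by
  classical
  by_cases hne : ∃ v : V, G.degree v = 2
  case neg =>
    have he : IsEmpty ((G.induce {v : V | G.degree v = 2}).ConnectedComponent) := by
      constructor
      intro K
      obtain ⟨v, -⟩ := K.exists_rep
      exact hne ⟨v.1, v.2⟩
    simp [Nat.card_of_isEmpty]
  obtain ⟨v₀, hv₀⟩ := hne
  have hNE : Nonempty V := ⟨v₀⟩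
  have hE : G.edgeFinset.card + 1 = Fintype.card V := hT.card_edgeFinset
  -- choose a root of degree ≠ 2
  obtain ⟨r, hr2⟩ : ∃ r : V, G.degree r ≠ 2 := by
    by_contra h
    push_neg at h
    have hsum : ∑ v : V, G.degree v = 2 * G.edgeFinset.card :=
      G.sum_degrees_eq_twice_card_edges
    have h2 : ∑ v : V, G.degree v = 2 * Fintype.card V := by
      simp [h, Finset.sum_const, mul_comm]
    have hpos : 0 < Fintype.card V := Fintype.card_pos
    omega
  -- unique paths to the root
  choose pt hptP hptU using fun v => hT.existsUnique_path v r
  have hpt_r : pt r = Walk.nil := (hptU r Walk.nil Walk.IsPath.nil).symm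
  have hnn : ∀ v : V, v ≠ r → ¬ (pt v).Nil := by
    intro v hv hnil
    apply hv
    have h0 : (pt v).length = 0 := Walk.nil_iff_length_eq.mp hnil
    calc v = (pt v).getVert 0 := (Walk.getVert_zero _).symm
      _ = r := (pt v).getVert_of_length_le (by omega)
  -- key lemma: if x is a neighbor of v other than the parent of v, then
  -- the path from x to r goes through v
  have keyB : ∀ (v x : V) (_ : v ≠ r) (h : G.Adj v x), x ≠ (pt v).getVert 1 →
      pt x = Walk.cons h.symm (pt v) := by
    intro v x hv h hx
    have hnotmem : x ∉ (pt v).support := by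
      intro hmem
      apply hx
      have hQ : ((pt v).takeUntil x hmem).IsPath := (hptP v).takeUntil hmem
      have hR : (Walk.cons h Walk.nil : G.Walk v x).IsPath := by
        simp [Walk.cons_isPath_iff, h.ne]
      have hQR : (pt v).takeUntil x hmem = Walk.cons h Walk.nil := by
        have := hT.IsAcyclic.path_unique ⟨(pt v).takeUntil x hmem, hQ⟩
          ⟨Walk.cons h Walk.nil, hR⟩
        exact congrArg Subtype.val this
      have hspec := (pt v).take_spec hmem
      rw [hQR] at hspec
      rw [← hspec, Walk.cons_append]; exact (Walk.snd_cons _ _).symm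
    exact (hptU x _ ((Walk.cons_isPath_iff _ _).mpr ⟨hptP v, hnotmem⟩)).symm
  -- every vertex has positive degree
  have hdeg1 : ∀ u : V, 0 < G.degree u := by
    intro u
    rw [G.degree_pos_iff_exists_adj]
    by_cases hu : u = r
    · have hvr : v₀ ≠ r := fun h => hr2 (h ▸ hv₀)
      have h0 : 0 < (pt v₀).length := Walk.not_nil_iff_lt_length.mp (hnn v₀ hvr)
      have hnnrev : ¬ ((pt v₀).reverse).Nil := by
        rw [Walk.not_nil_iff_lt_length, Walk.length_reverse]
        exact h0
      rw [hu]
      exact ⟨_, Walk.adj_snd hnnrev⟩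
    · exact ⟨(pt u).getVert 1, Walk.adj_snd (hnn u hu)⟩
  -- the target finset
  set T : Finset V := Finset.univ.filter (fun x => G.degree x ≠ 2 ∧ x ≠ r) with hTdef
  -- main construction: each component yields a distinct element of T
  have main : ∀ K : (G.induce {v : V | G.degree v = 2}).ConnectedComponent,
      ∃ x : V, (G.degree x ≠ 2 ∧ x ≠ r) ∧ ∃ b : {v : V | G.degree v = 2},
        (G.induce {v : V | G.degree v = 2}).connectedComponentMk b = K ∧
          (pt x).getVert 1 = ↑b := by
    intro K
    obtain ⟨b₀, hb₀⟩ := K.exists_rep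
    set FK : Finset {v : V | G.degree v = 2} :=
      Finset.univ.filter
        (fun v => (G.induce {v : V | G.degree v = 2}).connectedComponentMk v = K) with hFK
    have hFKne : FK.Nonempty := ⟨b₀, Finset.mem_filter.mpr ⟨Finset.mem_univ _, hb₀⟩⟩
    obtain ⟨b, hbFK, hbmax⟩ := FK.exists_max_image (fun v => (pt ↑v).length) hFKne
    have hbK : (G.induce {v : V | G.degree v = 2}).connectedComponentMk b = K := by
      simpa [hFK] using hbFK
    have hdb : G.degree (b : V) = 2 := b.2
    have hbr : (b : V) ≠ r := fun h => hr2 (h ▸ hdb)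
    have hpar_mem : (pt ↑b).getVert 1 ∈ G.neighborFinset ↑b := by
      simpa using Walk.adj_snd (hnn _ hbr)
    have hcard : (G.neighborFinset ↑b).card = 2 := by
      rw [← G.card_neighborFinset_eq_degree] at hdb; exact hdb
    obtain ⟨x, hxe⟩ : ((G.neighborFinset ↑b).erase ((pt ↑b).getVert 1)).Nonempty := by
      rw [← Finset.card_pos, Finset.card_erase_of_mem hpar_mem, hcard]
      norm_num
    have hxpar : x ≠ (pt ↑b).getVert 1 := Finset.ne_of_mem_erase hxe
    have hadjx : G.Adj ↑b x := by
      simpa using Finset.mem_of_mem_erase hxe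
    have hBx := keyB ↑b x hbr hadjx hxpar
    have hparx : (pt x).getVert 1 = ↑b := by rw [hBx]; exact Walk.snd_cons _ _
    have hlenx : (pt x).length = (pt ↑b).length + 1 := by rw [hBx]; simp
    have hxr : x ≠ r := by
      intro h
      rw [h, hpt_r] at hlenx
      simp at hlenx
    have hdx : G.degree x ≠ 2 := by
      intro hdx2
      have hadj2 : (G.induce {v : V | G.degree v = 2}).Adj ⟨x, hdx2⟩ b := by
        simp [hadjx.symm]
      have hxK : (G.induce {v : V | G.degree v = 2}).connectedComponentMk ⟨x, hdx2⟩ = K := by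
        rw [← hbK]
        exact ConnectedComponent.sound hadj2.reachable
      have hmem : (⟨x, hdx2⟩ : {v : V | G.degree v = 2}) ∈ FK := by simp [hFK, hxK]
      have hle : (pt x).length ≤ (pt ↑b).length := hbmax ⟨x, hdx2⟩ hmem
      omega
    exact ⟨x, ⟨hdx, hxr⟩, b, hbK, hparx⟩
  choose f hfT b hb1 hb2 using main
  -- injection into T
  have hcard1 : Nat.card ((G.induce {v : V | G.degree v = 2}).ConnectedComponent) ≤ T.card := by
    have hinj : Function.Injective
        (fun K : (G.induce {v : V | G.degree v = 2}).ConnectedComponent =>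
          (⟨f K, by simp [hTdef, (hfT K).1, (hfT K).2]⟩ : {x // x ∈ T})) := by
      intro K₁ K₂ h
      have hf : f K₁ = f K₂ := congrArg Subtype.val h
      have hbb : b K₁ = b K₂ := by
        apply Subtype.ext
        rw [← hb2 K₁, ← hb2 K₂, hf]
      rw [← hb1 K₁, ← hb1 K₂, hbb]
    have := Nat.card_le_card_of_injective _ hinj
    simpa [Nat.card_eq_fintype_card, Fintype.card_coe] using this
  -- final counting
  have hsub : insert r T ⊆ (Finset.univ.filter fun v => G.degree v = 1) ∪
      (Finset.univ.filter fun v => 3 ≤ G.degree v) := by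
    intro x hx
    have hd2 : G.degree x ≠ 2 := by
      rcases Finset.mem_insert.mp hx with h | h
      · rwa [h]
      · exact (Finset.mem_filter.mp h).2.1
    have hd1 := hdeg1 x
    simp only [Finset.mem_union, Finset.mem_filter, Finset.mem_univ, true_and]
    omega
  have hrT : r ∉ T := by simp [hTdef]
  have hdisj : Disjoint (Finset.univ.filter fun v => G.degree v = 1)
      (Finset.univ.filter fun v => 3 ≤ G.degree v) := by
    rw [Finset.disjoint_left]
    intro a ha hb
    have h1 := (Finset.mem_filter.mp ha).2
    have h3 := (Finset.mem_filter.mp hb).2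
    omega
  have hfin : T.card + 1 ≤ (Finset.univ.filter fun v => G.degree v = 1).card +
      (Finset.univ.filter fun v => 3 ≤ G.degree v).card := by
    calc T.card + 1 = (insert r T).card := (Finset.card_insert_of_notMem hrT).symm
      _ ≤ _ := Finset.card_le_card hsub
      _ = _ := Finset.card_union_of_disjoint hdisj
  omega
end

section
/- With the setup of a finite automaton (finite state set Q, alphabet Σ, transition δ, start state q_0) and a word s of length k with ℓ ≤ |Q| ≤ k: for any target length w ≥ k there exists a word s' of length k' with w ≤ k' ≤ w + |Q|, such that (i) δ run on s' from q_0 ends in the same state as on s, and (ii) the set of letters occurring in s' equals the set of letters occurring in s. -/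
lemma foldl_flatten_replicate {Q A : Type*} (δ : Q → A → Q) (p : Q) (y : List A)
    (hy : List.foldl δ p y = p) (n : ℕ) :
    List.foldl δ p (List.flatten (List.replicate n y)) = p := by
  induction n with
  | zero => simp
  | succ n ih => simp [List.replicate_succ, List.foldl_append, hy, ih]

/-- Specification of the `Pump` operation: for a word `s` of length `k` with
`ℓ ≤ |Q| ≤ k` and any target length `w ≥ k`, there is a word `s'` of length
`k' ∈ [w, w + |Q|]` driving the automaton to the same final state as `s`, and
whose set of letters equals that of `s`. -/
theorem stmt10 {Q A : Type*} [Fintype Q] [DecidableEq A] (ℓ : ℕ)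
    (hℓ : ℓ ≤ Fintype.card Q) (δ : Q → A → Q) (q₀ : Q) (s : List A)
    (hk : Fintype.card Q ≤ s.length) (w : ℕ) (hw : s.length ≤ w) :
    ∃ s' : List A, w ≤ s'.length ∧ s'.length ≤ w + Fintype.card Q ∧
      List.foldl δ q₀ s' = List.foldl δ q₀ s ∧ s'.toFinset = s.toFinset := by
  classical
  set c := Fintype.card Q with hc
  -- pigeonhole on prefixes of length 0..c
  have hcard : Fintype.card Q < Fintype.card (Fin (c + 1)) := by simp [hc]
  obtain ⟨a, b, hab, hfab⟩ :=
    Fintype.exists_ne_map_eq_of_card_lt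
      (fun i : Fin (c + 1) => List.foldl δ q₀ (s.take i)) hcard
  -- wlog a < b
  obtain ⟨i, j, hij, hfeq⟩ : ∃ i j : ℕ, i < j ∧ j ≤ c ∧
      List.foldl δ q₀ (s.take i) = List.foldl δ q₀ (s.take j) := by
    rcases lt_or_gt_of_ne hab with h | h
    · exact ⟨a, b, h, Nat.lt_succ_iff.mp b.isLt, hfab⟩
    · exact ⟨b, a, h, Nat.lt_succ_iff.mp a.isLt, hfab.symm⟩
  obtain ⟨hjc, hfeq⟩ := hfeq
  set k := s.length with hk'
  set x := s.take i with hx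
  set y := (s.drop i).take (j - i) with hy
  set z := s.drop j with hz
  have hxy : s.take j = x ++ y := by
    rw [hx, hy, ← List.take_add]
    congr 1
    omega
  have hs : s = x ++ y ++ z := by
    rw [← hxy, hz, List.take_append_drop]
  have hylen : y.length = j - i := by
    rw [hy]
    simp only [List.length_take, List.length_drop]
    omega
  set m := j - i with hm
  have hm0 : 0 < m := by omega
  -- the loop
  have hloop : List.foldl δ (List.foldl δ q₀ x) y = List.foldl δ q₀ x := by
    have := hfeq.symm
    rwa [hxy, List.foldl_append] at this
  -- choose number of repetitions
  set n := (w - k + m - 1) / m with hn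
  have hmod : (w - k + m - 1) % m < m := Nat.mod_lt _ hm0
  obtain ⟨P, hP⟩ : ∃ P, P = m * ((w - k + m - 1) / m) := ⟨_, rfl⟩
  obtain ⟨R, hR⟩ : ∃ R, R = (w - k + m - 1) % m := ⟨_, rfl⟩
  have h1 : P + R = w - k + m - 1 := by rw [hP, hR]; exact Nat.div_add_mod _ _
  have h2 : R < m := hR ▸ hmod
  have hnm1 : w - k ≤ n * m := by rw [hn, mul_comm, ← hP]; omega
  have hnm2 : n * m ≤ w - k + m - 1 := by rw [hn, mul_comm, ← hP]; omega
  have hsum : x.length + y.length + z.length = s.length := by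
    conv_rhs => rw [hs]
    simp only [List.length_append]
  rw [hylen] at hsum
  have hmc : m ≤ c := by omega
  refine ⟨x ++ List.flatten (List.replicate n y) ++ (y ++ z), ?_, ?_, ?_, ?_⟩
  · simp only [List.length_append, List.length_flatten, List.map_replicate,
      List.sum_replicate, smul_eq_mul, hylen]
    omega
  · simp only [List.length_append, List.length_flatten, List.map_replicate,
      List.sum_replicate, smul_eq_mul, hylen]
    omega
  · conv_rhs => rw [hs]
    simp only [List.foldl_append]
    rw [foldl_flatten_replicate δ _ y hloop n]
  · conv_rhs => rw [hs]
    ext a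
    simp only [List.toFinset_append, Finset.mem_union, List.mem_toFinset,
      List.mem_flatten, List.mem_replicate]
    constructor
    · rintro ((h | ⟨l, ⟨-, rfl⟩, hl⟩) | h | h) <;> tauto
    · rintro ((h | h) | h) <;> tauto
end
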